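/- arXiv:2603.02064 — 4 statements merged into one kernel-verified Lean document; each statement's English description precedes it below -/
import Mathlib

section
/- Consider the smooth dynamics in ℝ^L (for L ≥ 2 scalar parameters w_1,...,w_L) given by dw_i/dt = -sign(∂_{w_i} f(∏_j w_j))·|∂_{w_i} f(∏_j w_j)|^{q-1} for a differentiable f : ℝ → ℝ and q ≥ 1. Along any absolutely continuous solution (away from points where some w_i = 0), for all i, j ∈ [L], the quantity |w_i(t)|^q - |w_j(t)|^q is constant in time. -/
open Finset

private lemma real_sign_mul' (a b : ℝ) : Real.sign (a * b) = Real.sign a * Real.sign b := by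
  rcases lt_trichotomy a 0 with ha | ha | ha
  · rcases lt_trichotomy b 0 with hb | hb | hb
    · rw [Real.sign_of_pos (mul_pos_of_neg_of_neg ha hb), Real.sign_of_neg ha,
        Real.sign_of_neg hb]; ring
    · subst hb; simp [Real.sign_zero]
    · rw [Real.sign_of_neg (mul_neg_of_neg_of_pos ha hb), Real.sign_of_neg ha,
        Real.sign_of_pos hb]; ring
  · subst ha; simp [Real.sign_zero]
  · rcases lt_trichotomy b 0 with hb | hb | hb
    · rw [Real.sign_of_neg (mul_neg_of_pos_of_neg ha hb), Real.sign_of_pos ha,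
        Real.sign_of_neg hb]; ring
    · subst hb; simp [Real.sign_zero]
    · rw [Real.sign_of_pos (mul_pos ha hb), Real.sign_of_pos ha, Real.sign_of_pos hb]; ring

private lemma signType_coe_eq_real_sign {x : ℝ} (hx : x ≠ 0) :
    ((SignType.sign x : ℝ)) = Real.sign x := by
  rcases hx.lt_or_gt with h | h
  · simp [Real.sign_of_neg h, sign_neg h]
  · simp [Real.sign_of_pos h, sign_pos h]

private lemma key_sign_abs (r : ℝ) (a b : ℝ) :
    Real.sign a * (-Real.sign b * |b| ^ r) * |a| ^ r
      = -Real.sign (a * b) * |a * b| ^ r := by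
  rw [real_sign_mul', abs_mul, Real.mul_rpow (abs_nonneg _) (abs_nonneg _)]
  ring

/-- For the deep diagonal reparameterization `x = ∏ i, w i` trained with the
`L_p` steepest flow (exponent `q`, `1/p + 1/q = 1`), the quantities
`|w_i(t)|^q - |w_j(t)|^q` are conserved along any solution avoiding zeros. -/
theorem steepest_flow_balance_invariant
    (L : ℕ) (hL : 2 ≤ L) (q : ℝ) (hq : 1 ≤ q)
    (f : ℝ → ℝ) (hf : Differentiable ℝ f)
    (w : ℝ → Fin L → ℝ)
    (hw : ∀ t i, w t i ≠ 0)
    (hdyn : ∀ t (i : Fin L), HasDerivAt (fun s => w s i)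
      (- Real.sign ((∏ j ∈ univ.erase i, w t j) * deriv f (∏ j, w t j))
        * |(∏ j ∈ univ.erase i, w t j) * deriv f (∏ j, w t j)| ^ (q - 1)) t) :
    ∀ t (i j : Fin L), |w t i| ^ q - |w t j| ^ q = |w 0 i| ^ q - |w 0 j| ^ q := by
  intro t i j
  have key : ∀ s (k : Fin L), HasDerivAt (fun u => |w u k| ^ q)
      (q * (-Real.sign ((∏ m, w s m) * deriv f (∏ m, w s m))
        * |(∏ m, w s m) * deriv f (∏ m, w s m)| ^ (q - 1))) s := by
    intro s k
    have h1 : HasDerivAt (fun u => |w u k|)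
        ((SignType.sign (w s k) : ℝ) *
          (- Real.sign ((∏ m ∈ univ.erase k, w s m) * deriv f (∏ m, w s m))
            * |(∏ m ∈ univ.erase k, w s m) * deriv f (∏ m, w s m)| ^ (q - 1))) s :=
      by have h := (hasDerivAt_abs (hw s k)).comp s (hdyn s k); exact h
    have h2 := h1.rpow_const (p := q) (Or.inl (abs_ne_zero.mpr (hw s k)))
    convert h2 using 1
    rw [signType_coe_eq_real_sign (hw s k)]
    set g := (∏ m ∈ univ.erase k, w s m) * deriv f (∏ m, w s m) with hg
    have hx : w s k * g = (∏ m, w s m) * deriv f (∏ m, w s m) := by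
      rw [hg, ← mul_assoc, Finset.mul_prod_erase univ (w s) (Finset.mem_univ k)]
    calc q * (-Real.sign ((∏ m, w s m) * deriv f (∏ m, w s m))
          * |(∏ m, w s m) * deriv f (∏ m, w s m)| ^ (q - 1))
        = q * (-Real.sign (w s k * g) * |w s k * g| ^ (q - 1)) := by rw [hx]
      _ = q * (Real.sign (w s k) * (-Real.sign g * |g| ^ (q - 1)) * |w s k| ^ (q - 1)) := by
          rw [key_sign_abs]
      _ = Real.sign (w s k) * (-Real.sign g * |g| ^ (q - 1)) * q * |w s k| ^ (q - 1) := by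
          ring
  set F := fun u => |w u i| ^ q - |w u j| ^ q with hFdef
  have hF : ∀ s, HasDerivAt F 0 s := by
    intro s
    have := (key s i).sub (key s j)
    rw [sub_self] at this; exact this
  have hconst := is_const_of_deriv_eq_zero
    (fun s => (hF s).differentiableAt) (fun s => (hF s).deriv) t 0
  simpa [hFdef] using hconst
end

section
/- Consider the dynamics dw_i/dt = -sign(∂_{w_i} F(w))·|∂_{w_i} F(w)|^{q-1} - α(t)·w_i where F(w) = f(∏_{j=1}^L w_j) and α : [0,∞) → ℝ is continuous. Then along any smooth solution (away from zeros of the w_i), for all i, j ∈ [L]: |w_i(t)|^q - |w_j(t)|^q = (|w_i(0)|^q - |w_j(0)|^q)·exp(-q·∫_0^t α(s) ds). -/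
open Finset

private lemma real_sign_mul'_s2 (x y : ℝ) : Real.sign (x * y) = Real.sign x * Real.sign y := by
  rcases lt_trichotomy x 0 with hx | hx | hx <;> rcases lt_trichotomy y 0 with hy | hy | hy <;>
    simp [hx, hy, Real.sign_of_neg, Real.sign_of_pos, mul_pos, mul_pos_of_neg_of_neg,
      mul_neg_of_neg_of_pos, mul_neg_of_pos_of_neg, *]

private lemma signtype_cast_eq (x : ℝ) : ((SignType.sign x : ℝ)) = Real.sign x := by
  rcases lt_trichotomy x 0 with hx | hx | hx <;>
    simp [hx, Real.sign_of_neg, Real.sign_of_pos, *]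

private lemma sign_rpow_mul (x y r : ℝ) :
    Real.sign x * |x| ^ r * (Real.sign y * |y| ^ r) = Real.sign (x * y) * |x * y| ^ r := by
  rw [real_sign_mul'_s2, abs_mul, Real.mul_rpow (abs_nonneg _) (abs_nonneg _)]
  ring

private lemma real_sign_mul_self (x : ℝ) : Real.sign x * x = |x| := by
  rcases lt_trichotomy x 0 with hx | hx | hx <;>
    simp [hx, Real.sign_of_neg, Real.sign_of_pos, abs_of_neg, abs_of_pos, *] <;> ring

/-- Balance equations for `L_p` steepest descent with decoupled weight decay
`α(t)` on the deep diagonal reparameterization `x = ∏ i, w i`: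
`|w_i(t)|^q - |w_j(t)|^q = (|w_i(0)|^q - |w_j(0)|^q) · exp(-q ∫_0^t α)`. -/
theorem steepest_flow_weight_decay_balance
    (L : ℕ) (hL : 2 ≤ L) (q : ℝ) (hq : 1 ≤ q)
    (f : ℝ → ℝ) (hf : Differentiable ℝ f)
    (α : ℝ → ℝ) (hα : Continuous α)
    (w : ℝ → Fin L → ℝ)
    (hw : ∀ t i, w t i ≠ 0)
    (hdyn : ∀ t (i : Fin L), HasDerivAt (fun s => w s i)
      (- Real.sign ((∏ j ∈ univ.erase i, w t j) * deriv f (∏ j, w t j))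
          * |(∏ j ∈ univ.erase i, w t j) * deriv f (∏ j, w t j)| ^ (q - 1)
        - α t * w t i) t) :
    ∀ t, 0 ≤ t → ∀ i j : Fin L,
      |w t i| ^ q - |w t j| ^ q
        = (|w 0 i| ^ q - |w 0 j| ^ q) * Real.exp (-q * ∫ s in (0:ℝ)..t, α s) := by
  -- shorthand
  set c : ℝ → ℝ := fun t => (∏ j, w t j) * deriv f (∏ j, w t j) with hc
  -- derivative of |w t i| ^ q
  have hD : ∀ (t : ℝ) (i : Fin L), HasDerivAt (fun s => |w s i| ^ q)
      (-(q * (Real.sign (c t) * |c t| ^ (q - 1))) - q * α t * |w t i| ^ q) t := by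
    intro t i
    set a : ℝ := (∏ j ∈ univ.erase i, w t j) * deriv f (∏ j, w t j) with ha
    have hne : w t i ≠ 0 := hw t i
    have h := (Real.hasDerivAt_rpow_const (x := |w t i|) (p := q)
        (Or.inl (abs_ne_zero.2 hne))).comp t ((hasDerivAt_abs hne).comp t (hdyn t i))
    refine h.congr_deriv ?_
    symm
    have hpos : (0 : ℝ) < |w t i| := abs_pos.2 hne
    have hprod : w t i * a = c t := by
      rw [ha, hc, ← mul_assoc, Finset.mul_prod_erase _ _ (Finset.mem_univ i)]
    have hsgn : Real.sign (w t i) * |w t i| ^ (q - 1) * (Real.sign a * |a| ^ (q - 1))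
        = Real.sign (c t) * |c t| ^ (q - 1) := by
      rw [← hprod]
      exact sign_rpow_mul _ _ _
    have habs' : Real.sign (w t i) * w t i * |w t i| ^ (q - 1) = |w t i| ^ q := by
      rw [real_sign_mul_self]
      calc |w t i| * |w t i| ^ (q - 1) = |w t i| ^ (q - 1) * |w t i| := by ring
        _ = |w t i| ^ (q - 1 + 1) := (Real.rpow_add_one hpos.ne' _).symm
        _ = |w t i| ^ q := by norm_num
    rw [signtype_cast_eq]
    linear_combination q * hsgn + (q * α t) * habs'
  -- the integral of α
  set A : ℝ → ℝ := fun t => ∫ s in (0:ℝ)..t, α s with hA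
  have hAd : ∀ t : ℝ, HasDerivAt A (α t) t := fun t =>
    intervalIntegral.integral_hasDerivAt_right (hα.intervalIntegrable _ _)
      (hα.stronglyMeasurableAtFilter _ _) hα.continuousAt
  intro t _ i j
  -- difference and its ODE
  have hDd : ∀ s : ℝ, HasDerivAt (fun u => |w u i| ^ q - |w u j| ^ q)
      (-(q * α s) * (|w s i| ^ q - |w s j| ^ q)) s := by
    intro s
    have := (hD s i).sub (hD s j)
    refine this.congr_deriv ?_
    ring
  set E : ℝ → ℝ := fun s => (|w s i| ^ q - |w s j| ^ q) * Real.exp (q * A s) with hE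
  have hEd : ∀ s : ℝ, HasDerivAt E 0 s := by
    intro s
    have := (hDd s).mul (((hAd s).const_mul q).exp)
    refine this.congr_deriv ?_
    ring
  have hconst : E t = E 0 :=
    is_const_of_deriv_eq_zero (fun x => (hEd x).differentiableAt)
      (fun x => (hEd x).deriv) t 0
  have hA0 : A 0 = 0 := intervalIntegral.integral_same
  have hexp : Real.exp (q * A t) ≠ 0 := Real.exp_ne_zero _
  have : (|w t i| ^ q - |w t j| ^ q) * Real.exp (q * A t) = |w 0 i| ^ q - |w 0 j| ^ q := by
    simpa [hE, hA0] using hconst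
  have hneg : Real.exp (-q * A t) = (Real.exp (q * A t))⁻¹ := by
    rw [← Real.exp_neg]; ring_nf
  rw [hneg]
  field_simp
  linarith [this]
end

section
/- Let f : ℝ^n → ℝ be twice continuously differentiable with ∇f(0) ≠ 0, and let L ≥ 3. Define F : (ℝ^n)^L → ℝ by F(w_1,...,w_L) = f(w_1 ⊙ w_2 ⊙ ⋯ ⊙ w_L) (entrywise product). Then every point (w_1,...,w_L) with exactly two of the vectors w_i, w_j equal to zero (i ≠ j) and all other w_k nonzero is a critical point of F at which the Hessian of F is not positive semidefinite; i.e., it is a saddle point. -/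
open Finset

private lemma prod_split_two {L : ℕ} (i j : Fin L) (hij : i ≠ j) (x : Fin L → ℝ) :
    ∏ k, x k = x i * (x j * ∏ k ∈ (univ.erase i).erase j, x k) := by
  rw [Finset.mul_prod_erase _ _ (Finset.mem_erase.mpr ⟨hij.symm, Finset.mem_univ j⟩),
    Finset.mul_prod_erase _ _ (Finset.mem_univ i)]

private lemma line_deriv_aux {E : Type*} [NormedAddCommGroup E] [NormedSpace ℝ E]
    {F : E → ℝ} (hF : Differentiable ℝ F) (p v : E) (t : ℝ) :
    HasDerivAt (fun s : ℝ => F (p + s • v)) (fderiv ℝ F (p + t • v) v) t := by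
  have hc : HasDerivAt (fun s : ℝ => p + s • v) v t := by
    simpa using (((hasDerivAt_id t).smul_const v).const_add p)
  exact (hF (p + t • v)).hasFDerivAt.comp_hasDerivAt t hc

/-- Saddle points of deep diagonal reparameterizations: if `∇f(0) ≠ 0`, `L ≥ 3`,
and exactly two of the factors `w i, w j` vanish (entrywise) while all other
factors are entrywise nonzero, then `F(w) = f(w_1 ⊙ ⋯ ⊙ w_L)` has a critical
point there whose Hessian is not positive semidefinite. -/
theorem deep_diagonal_saddle_points
    (n L : ℕ) (hL : 3 ≤ L)
    (f : (Fin n → ℝ) → ℝ) (hf : ContDiff ℝ 2 f)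
    (hf0 : fderiv ℝ f 0 ≠ 0)
    (F : (Fin L → Fin n → ℝ) → ℝ)
    (hF : ∀ w, F w = f (fun c => ∏ i, w i c))
    (p : Fin L → Fin n → ℝ) (i j : Fin L) (hij : i ≠ j)
    (hpi : p i = 0) (hpj : p j = 0)
    (hother : ∀ k, k ≠ i → k ≠ j → ∀ c, p k c ≠ 0) :
    fderiv ℝ F p = 0 ∧ ∃ v, iteratedFDeriv ℝ 2 F p ![v, v] < 0 := by
  classical
  have hFeq : F = fun w => f (fun c => ∏ k, w k c) := funext hF
  subst hFeq
  -- smoothness of F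
  have hg : ContDiff ℝ 2 (fun (w : Fin L → Fin n → ℝ) (c : Fin n) => ∏ k, w k c) := by
    apply contDiff_pi.mpr
    intro c
    apply contDiff_prod
    intro k _
    exact (ContinuousLinearMap.contDiff
      ((ContinuousLinearMap.proj c : (Fin n → ℝ) →L[ℝ] ℝ).comp
        (ContinuousLinearMap.proj k : (Fin L → Fin n → ℝ) →L[ℝ] (Fin n → ℝ))))
  have hFC2 : ContDiff ℝ 2 (fun w : Fin L → Fin n → ℝ => f (fun c => ∏ k, w k c)) :=
    hf.comp hg
  have hFd : Differentiable ℝ (fun w : Fin L → Fin n → ℝ => f (fun c => ∏ k, w k c)) :=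
    hFC2.differentiable two_ne_zero
  have hfd : Differentiable ℝ f := hf.differentiable two_ne_zero
  -- critical point
  have hpi' : ∀ c, p i c = 0 := fun c => by rw [hpi]; rfl
  have hpj' : ∀ c, p j c = 0 := fun c => by rw [hpj]; rfl
  -- general key identity
  have key : ∀ (v : Fin L → Fin n → ℝ) (s : ℝ) (c : Fin n),
      (∏ k, (p + s • v) k c) =
        s ^ 2 * (v i c * v j c * ∏ k ∈ (univ.erase i).erase j, (p k c + s * v k c)) := by
    intro v s c
    rw [prod_split_two i j hij (fun k => (p + s • v) k c)]
    simp only [Pi.add_apply, Pi.smul_apply, smul_eq_mul, hpi' c, hpj' c, zero_add]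
    ring
  have part1 : fderiv ℝ (fun w : Fin L → Fin n → ℝ => f (fun c => ∏ k, w k c)) p = 0 := by
    ext v
    have hA := line_deriv_aux hFd p v 0
    simp only [zero_smul, add_zero] at hA
    set ψ : ℝ → (Fin n → ℝ) := fun s c =>
      s ^ 2 * (v i c * v j c * ∏ k ∈ (univ.erase i).erase j, (p k c + s * v k c)) with hψdef
    have hψ0 : ψ 0 = 0 := by funext c; simp [hψdef]
    have hψ : HasDerivAt ψ 0 0 := by
      apply hasDerivAt_pi.mpr
      intro c
      have hR : HasDerivAt (fun s : ℝ =>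
          v i c * v j c * ∏ k ∈ (univ.erase i).erase j, (p k c + s * v k c))
          (deriv (fun s : ℝ =>
            v i c * v j c * ∏ k ∈ (univ.erase i).erase j, (p k c + s * v k c)) 0) 0 := by
        apply DifferentiableAt.hasDerivAt
        apply DifferentiableAt.const_mul
        apply DifferentiableAt.fun_finsetProd
        intro k _
        exact (differentiableAt_const _).add ((differentiableAt_fun_id).mul (differentiableAt_const _))
      have := (hasDerivAt_pow 2 (0 : ℝ)).mul hR
      simpa [Pi.mul_def] using this
    have hB : HasDerivAt (fun s : ℝ => f (ψ s)) 0 0 := by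
      have := (hfd (ψ 0)).hasFDerivAt.comp_hasDerivAt 0 hψ
      simpa [Function.comp_def] using this
    have heqfun : (fun s : ℝ => f (fun c => ∏ k, (p + s • v) k c)) = fun s => f (ψ s) := by
      funext s
      congr 1
      funext c
      exact key v s c
    rw [heqfun] at hA
    have := hA.unique hB
    simpa using this
  refine ⟨part1, ?_⟩
  -- choose direction with negative derivative
  obtain ⟨u0, hu0⟩ : ∃ u0, fderiv ℝ f 0 u0 ≠ 0 := by
    by_contra h
    push_neg at h
    exact hf0 (ContinuousLinearMap.ext fun x => by simp [h x])
  set u : Fin n → ℝ := (-(fderiv ℝ f 0 u0)⁻¹) • u0 with hu_def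
  have hu : fderiv ℝ f 0 u = -1 := by
    rw [hu_def, map_smul]
    simp [smul_eq_mul]
    field_simp
  set P : Fin n → ℝ := fun c => ∏ k ∈ (univ.erase i).erase j, p k c with hP_def
  have hP : ∀ c, P c ≠ 0 := by
    intro c
    apply Finset.prod_ne_zero_iff.mpr
    intro k hk
    exact hother k (Finset.ne_of_mem_erase (Finset.mem_of_mem_erase hk))
      (Finset.ne_of_mem_erase hk) c
  set v : Fin L → Fin n → ℝ :=
    fun k c => if k = i then u c / (2 * P c) else if k = j then 1 else 0 with hv_def
  have hvi : ∀ c, v i c = u c / (2 * P c) := fun c => by simp [hv_def]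
  have hvj : ∀ c, v j c = 1 := fun c => by simp [hv_def, hij.symm]
  have hvk : ∀ k, k ≠ i → k ≠ j → ∀ c, v k c = 0 := fun k h1 h2 c => by simp [hv_def, h1, h2]
  -- the curve
  have key2 : ∀ s : ℝ, (fun c => ∏ k, (p + s • v) k c) = (s ^ 2 / 2) • u := by
    intro s
    funext c
    rw [key v s c]
    have hprod : ∏ k ∈ (univ.erase i).erase j, (p k c + s * v k c) = P c := by
      apply Finset.prod_congr rfl
      intro k hk
      rw [hvk k (Finset.ne_of_mem_erase (Finset.mem_of_mem_erase hk))
        (Finset.ne_of_mem_erase hk) c]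
      ring
    rw [hprod, hvi c, hvj c]
    have h2P : (2 : ℝ) * P c ≠ 0 := by
      simp [hP c]
    rw [Pi.smul_apply, smul_eq_mul]
    field_simp [hP c]
  set h : ℝ → ℝ := fun t => fderiv ℝ f ((t ^ 2 / 2) • u) u with hh_def
  have hφ : ∀ t : ℝ, HasDerivAt (fun s : ℝ => f ((s ^ 2 / 2) • u)) (t * h t) t := by
    intro t
    have hψ : HasDerivAt (fun s : ℝ => (s ^ 2 / 2) • u) (t • u) t := by
      have : HasDerivAt (fun s : ℝ => (s ^ 2 / 2) • u) _ t := ((hasDerivAt_pow 2 t).div_const 2).smul_const u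
      convert this using 2
      push_cast
      ring
    have := (hfd ((t ^ 2 / 2) • u)).hasFDerivAt.comp_hasDerivAt t hψ
    simpa [hh_def, map_smul, smul_eq_mul, Function.comp_def] using this
  have heq : ∀ t : ℝ,
      fderiv ℝ (fun w : Fin L → Fin n → ℝ => f (fun c => ∏ k, w k c)) (p + t • v) v
        = t * h t := by
    intro t
    have hA := line_deriv_aux hFd p v t
    have heqfun : (fun s : ℝ => f (fun c => ∏ k, (p + s • v) k c))
        = fun s : ℝ => f ((s ^ 2 / 2) • u) := by
      funext s
      rw [key2 s]
    rw [heqfun] at hA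
    exact hA.unique (hφ t)
  -- second derivative
  have hC1 : ContDiff ℝ 1 (fderiv ℝ (fun w : Fin L → Fin n → ℝ => f (fun c => ∏ k, w k c))) :=
    hFC2.fderiv_right (le_refl 2)
  have hGd : Differentiable ℝ
      (fun x => fderiv ℝ (fun w : Fin L → Fin n → ℝ => f (fun c => ∏ k, w k c)) x v) :=
    fun x => ((hC1.differentiable one_ne_zero) x).clm_apply (differentiableAt_const v)
  have hh_diff : DifferentiableAt ℝ h 0 := by
    have h1 : ContDiff ℝ 1 (fderiv ℝ f) := hf.fderiv_right (le_refl 2)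
    have h2 : DifferentiableAt ℝ (fun t : ℝ => (t ^ 2 / 2) • u) 0 :=
      (((differentiableAt_fun_id).pow 2).div_const 2).smul_const u
    exact (((h1.differentiable one_ne_zero) _).comp 0 h2).clm_apply (differentiableAt_const u)
  have hmul : HasDerivAt (fun t : ℝ => t * h t) (h 0) 0 := by
    have := (hasDerivAt_id (0 : ℝ)).mul hh_diff.hasDerivAt
    simpa [Pi.mul_def] using this
  have hline := line_deriv_aux hGd p v 0
  simp only [zero_smul, add_zero] at hline
  have heqfun2 : (fun s : ℝ =>
      fderiv ℝ (fun w : Fin L → Fin n → ℝ => f (fun c => ∏ k, w k c)) (p + s • v) v)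
      = fun s : ℝ => s * h s := funext heq
  rw [heqfun2] at hline
  have hGderiv := hline.unique hmul
  have h0 : h 0 = -1 := by
    rw [hh_def]
    simp only []
    have : ((0 : ℝ) ^ 2 / 2) • u = 0 := by norm_num
    rw [this, hu]
  -- identify with the Hessian
  have hclm : fderiv ℝ
      (fun x => fderiv ℝ (fun w : Fin L → Fin n → ℝ => f (fun c => ∏ k, w k c)) x v) p
      = (fderiv ℝ (fderiv ℝ (fun w : Fin L → Fin n → ℝ => f (fun c => ∏ k, w k c))) p).flip v := by
    rw [fderiv_clm_apply ((hC1.differentiable one_ne_zero) p) (differentiableAt_const v)]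
    simp
  refine ⟨v, ?_⟩
  rw [iteratedFDeriv_two_apply]
  have : fderiv ℝ (fderiv ℝ (fun w : Fin L → Fin n → ℝ => f (fun c => ∏ k, w k c))) p
      (![v, v] 0) (![v, v] 1) = -1 := by
    simp only [Matrix.cons_val_zero, Matrix.cons_val_one, Matrix.head_cons]
    calc fderiv ℝ (fderiv ℝ (fun w : Fin L → Fin n → ℝ => f (fun c => ∏ k, w k c))) p v v
        = (fderiv ℝ (fderiv ℝ (fun w : Fin L → Fin n → ℝ => f (fun c => ∏ k, w k c))) p).flip v v := rfl
      _ = fderiv ℝ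
          (fun x => fderiv ℝ (fun w : Fin L → Fin n → ℝ => f (fun c => ∏ k, w k c)) x v) p v := by
            rw [hclm]
      _ = h 0 := by rw [hGderiv]
      _ = -1 := h0
  rw [this]
  norm_num
end

section
/- Let R : ℝ^n → ℝ be C² with ∇²R(x)^{-1} existing and satisfying v^T ∇²R(x)^{-1} v ≥ μ‖v‖₂² for all x, v (inverse μ-coercivity), and suppose R is separable so that ∇²R(x)^{-1} is diagonal with entries ≥ μ. Let f be C¹ and let x_t solve d/dt ∇R(x_t) = -sign(∇f(x_t))⊙|∇f(x_t)|^{q-1} with q ∈ [1,2]. Then d/dt f(x_t) ≤ -μ·‖∇f(x_t)‖_q^q ≤ 0; in particular f(x_t) is nonincreasing. -/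
open Finset

private lemma sign_abs_rpow (q : ℝ) (hq1 : 1 ≤ q) (a : ℝ) :
    a * (Real.sign a * |a| ^ (q - 1)) = |a| ^ q := by
  rcases eq_or_ne a 0 with rfl | ha
  · simp [Real.sign_zero, Real.zero_rpow (by linarith : q ≠ 0)]
  · have habs : (0 : ℝ) < |a| := abs_pos.2 ha
    have h1 : a * Real.sign a = |a| := by
      rcases lt_or_gt_of_ne ha with h | h
      · rw [Real.sign_of_neg h, abs_of_neg h]; ring
      · rw [Real.sign_of_pos h, abs_of_pos h]; ring
    have h2 : |a| ^ (q - 1) = |a| ^ q / |a| := by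
      rw [Real.rpow_sub habs, Real.rpow_one]
    rw [h2, ← mul_assoc, h1]
    field_simp

/-- Descent along a separable, inversely `μ`-coercive steepest mirror flow:
if `∇²R` is diagonal with diagonal inverse entries `d ≥ μ` and `x_t` solves
`dx_i/dt = -d_i·sign(∂_i f)·|∂_i f|^{q-1}` (equivalently
`d/dt ∇R(x_t) = -sign(∇f)⊙|∇f|^{q-1}`), then
`d/dt f(x_t) ≤ -μ‖∇f(x_t)‖_q^q ≤ 0` and `f(x_t)` is nonincreasing. -/
theorem steepest_mirror_flow_descent
    (n : ℕ) (μ : ℝ) (hμ : 0 < μ) (q : ℝ) (hq1 : 1 ≤ q) (hq2 : q ≤ 2)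
    (R f : EuclideanSpace ℝ (Fin n) → ℝ)
    (hR : ContDiff ℝ 2 R) (hf : ContDiff ℝ 1 f)
    (d : EuclideanSpace ℝ (Fin n) → Fin n → ℝ)
    (hdiag : ∀ y (i j : Fin n), i ≠ j →
      iteratedFDeriv ℝ 2 R y ![EuclideanSpace.single i 1, EuclideanSpace.single j 1] = 0)
    (hinv : ∀ y (i : Fin n),
      iteratedFDeriv ℝ 2 R y ![EuclideanSpace.single i 1, EuclideanSpace.single i 1]
        * d y i = 1)
    (hcoer : ∀ y i, μ ≤ d y i)
    (x : ℝ → EuclideanSpace ℝ (Fin n))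
    (hdyn : ∀ t (i : Fin n), HasDerivAt (fun s => x s i)
      (-(d (x t) i * (Real.sign (gradient f (x t) i)
          * |gradient f (x t) i| ^ (q - 1)))) t) :
    (∀ t : ℝ, deriv (fun s => f (x s)) t ≤ -μ * ∑ i, |gradient f (x t) i| ^ q) ∧
    (∀ t : ℝ, -μ * ∑ i, |gradient f (x t) i| ^ q ≤ 0) ∧
    Antitone (fun t => f (x t)) := by
  have hfd : Differentiable ℝ f := hf.differentiable one_ne_zero
  have key : ∀ t, HasDerivAt (fun s => f (x s))
      (-∑ i, d (x t) i * |gradient f (x t) i| ^ q) t := by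
    intro t
    set g := gradient f (x t) with hg
    set e := EuclideanSpace.equiv (Fin n) ℝ
    have h1 : HasDerivAt (fun s => e (x s))
        (fun i => -(d (x t) i * (Real.sign (g i) * |g i| ^ (q - 1)))) t := by
      rw [hasDerivAt_pi]
      intro i
      exact hdyn t i
    have hv : HasDerivAt x
        (e.symm (fun i => -(d (x t) i * (Real.sign (g i) * |g i| ^ (q - 1))))) t := by
      have := (e.symm.hasFDerivAt (x := fun i => e (x t) i)).comp_hasDerivAt t h1
      have hx : (⇑e.symm ∘ fun s => e (x s)) = x := by funext s; simp [e]
      rw [hx] at this; exact this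
    have hgrad := (hfd (x t)).hasGradientAt
    have hcomp := hgrad.hasFDerivAt.comp_hasDerivAt t hv
    refine HasDerivAt.congr_deriv hcomp ?_
    symm
    simp only [InnerProductSpace.toDual_apply_apply]
    rw [PiLp.inner_apply, ← Finset.sum_neg_distrib]
    refine Finset.sum_congr rfl fun i _ => ?_
    have hi : (e.symm fun i => -(d (x t) i * (Real.sign (g i) * |g i| ^ (q - 1)))) i
        = -(d (x t) i * (Real.sign (g i) * |g i| ^ (q - 1))) := rfl
    simp only [RCLike.inner_apply, conj_trivial, hi, ← hg]
    have hkey : g i * (d (x t) i * (Real.sign (g i) * |g i| ^ (q - 1)))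
        = d (x t) i * |g i| ^ q := by
      rw [← sign_abs_rpow q hq1 (g i)]; ring
    rw [← hkey]; ring
  have hnn : ∀ t i, (0:ℝ) ≤ |gradient f (x t) i| ^ q :=
    fun t i => Real.rpow_nonneg (abs_nonneg _) q
  have hsum : ∀ t, μ * ∑ i, |gradient f (x t) i| ^ q
      ≤ ∑ i, d (x t) i * |gradient f (x t) i| ^ q := by
    intro t
    rw [Finset.mul_sum]
    exact Finset.sum_le_sum fun i _ =>
      mul_le_mul_of_nonneg_right (hcoer (x t) i) (hnn t i)
  have hderiv : ∀ t, deriv (fun s => f (x s)) t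
      = -∑ i, d (x t) i * |gradient f (x t) i| ^ q := fun t => (key t).deriv
  refine ⟨fun t => ?_, fun t => ?_, ?_⟩
  · rw [hderiv t, neg_mul]
    exact neg_le_neg (hsum t)
  · rw [neg_mul]
    refine neg_nonpos.2 (mul_nonneg hμ.le (Finset.sum_nonneg fun i _ => hnn t i))
  · apply antitone_of_deriv_nonpos
    · exact fun t => (key t).differentiableAt
    · intro t
      rw [hderiv t]
      refine neg_nonpos.2 (Finset.sum_nonneg fun i _ => ?_)
      exact mul_nonneg (le_trans hμ.le (hcoer (x t) i)) (hnn t i)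
end
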